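/- The lowering relation (d/dr + m/r) Q_n^{k,m}(r) = 2√((n+m)(n+k+1)) Q_n^{k+1,m-1}(r) holds for r ∈ (0,1). -/

import Mathlib

/-- The Jacobi polynomial `P_n^{(a,b)}(x)`. -/
noncomputable def jacobiP (n : ℕ) (a b : ℝ) (x : ℝ) : ℝ :=
  (1 / 2 ^ n) * ∑ s ∈ Finset.range (n + 1),
    (Real.Gamma (a + n + 1) / (Real.Gamma (a + n - s + 1) * (Nat.factorial s))) *
    (Real.Gamma (b + n + 1) / (Real.Gamma (b + s + 1) * (Nat.factorial (n - s)))) *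
    (x - 1) ^ (n - s) * (x + 1) ^ s
/-- The Jacobi orthogonality normalization `W_n^{a,b}`. -/
noncomputable def Wnorm (n : ℕ) (a b : ℝ) : ℝ :=
  2 ^ (a + b + 1) / (2 * n + a + b + 1) *
    (Real.Gamma (n + a + 1) * Real.Gamma (n + b + 1) /
      (Real.Gamma (n + a + b + 1) * (Nat.factorial n)))

/-- The normalization `N_n^{k,m} = W_n^{k,m} / 2^{2+k+m}`. -/
noncomputable def Nnorm (n k m : ℕ) : ℝ := Wnorm n k m / 2 ^ (2 + k + m)

/-- The radial basis element `Q_n^{k,m}(r)`. -/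
noncomputable def Q (n k m : ℕ) (r : ℝ) : ℝ :=
  r ^ m * jacobiP n k m (2 * r ^ 2 - 1) / Real.sqrt (Nnorm n k m)

noncomputable def jc (n : ℕ) (a b : ℝ) (s : ℕ) : ℝ :=
  (Real.Gamma (a + n + 1) / (Real.Gamma (a + n - s + 1) * (Nat.factorial s))) *
  (Real.Gamma (b + n + 1) / (Real.Gamma (b + s + 1) * (Nat.factorial (n - s))))

lemma jacobiP_eq (n : ℕ) (a b x : ℝ) :
    jacobiP n a b x = (1 / 2 ^ n) * ∑ s ∈ Finset.range (n + 1),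
      jc n a b s * (x - 1) ^ (n - s) * (x + 1) ^ s := rfl

noncomputable def jd (n : ℕ) (a b : ℝ) (x : ℝ) : ℝ :=
  (1 / 2 ^ n) * ∑ s ∈ Finset.range (n + 1), jc n a b s *
    (((n-s : ℕ):ℝ) * (x - 1) ^ (n - s - 1) * (x + 1) ^ s
      + (s:ℝ) * (x - 1) ^ (n - s) * (x + 1) ^ (s - 1))

lemma hasDerivAt_jacobiP (n : ℕ) (a b x : ℝ) :
    HasDerivAt (fun y => jacobiP n a b y) (jd n a b x) x := by
  have h : ∀ s ∈ Finset.range (n+1), HasDerivAt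
      (fun y : ℝ => jc n a b s * (y - 1) ^ (n - s) * (y + 1) ^ s)
      (jc n a b s * (((n-s : ℕ):ℝ) * (x - 1) ^ (n - s - 1) * (x + 1) ^ s
        + (s:ℝ) * (x - 1) ^ (n - s) * (x + 1) ^ (s - 1))) x := by
    intro s _
    have h1 : HasDerivAt (fun y : ℝ => (y - 1) ^ (n - s))
        (((n-s : ℕ):ℝ) * (x - 1) ^ (n - s - 1)) x := by
      simpa [Pi.pow_def] using ((hasDerivAt_id x).sub_const 1).pow (n - s)
    have h2 : HasDerivAt (fun y : ℝ => (y + 1) ^ s)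
        ((s:ℝ) * (x + 1) ^ (s - 1)) x := by
      simpa [Pi.pow_def] using ((hasDerivAt_id x).add_const 1).pow s
    have := (h1.const_mul (jc n a b s)).fun_mul h2
    exact this.congr_deriv (by ring)
  have := (HasDerivAt.fun_sum h).const_mul ((1:ℝ) / 2 ^ n)
  simp only [jacobiP_eq, jd]
  exact this

lemma gnat (j : ℕ) : Real.Gamma ((j:ℝ)+1) = j.factorial := Real.Gamma_nat_eq_factorial j

lemma jc_eval (a b n s A B C D E : ℕ) (hs : s ≤ n) (hA : A = a + n) (hB : B = a + n - s)
    (hC : C = b + n) (hD : D = b + s) (hE : E = n - s) :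
    jc n a b s = (A.factorial / (B.factorial * s.factorial)) *
      (C.factorial / (D.factorial * E.factorial)) := by
  subst hA hB hC hD hE
  unfold jc
  have h1 : ((a:ℝ) + ↑n + 1) = ((a + n : ℕ):ℝ) + 1 := by push_cast; ring
  have hs' : s ≤ a + n := le_trans hs (Nat.le_add_left n a)
  have h2 : ((a:ℝ) + ↑n - ↑s + 1) = ((a + n - s : ℕ):ℝ) + 1 := by
    rw [Nat.cast_sub hs']; push_cast; ring
  have h3 : ((b:ℝ) + ↑n + 1) = ((b + n : ℕ):ℝ) + 1 := by push_cast; ring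
  have h4 : ((b:ℝ) + ↑s + 1) = ((b + s : ℕ):ℝ) + 1 := by push_cast; ring
  rw [h1, h2, h3, h4, gnat, gnat, gnat, gnat]

lemma Ffac (j : ℕ) : (((j+1).factorial : ℕ) : ℝ) = (j+1) * j.factorial := by
  push_cast [Nat.factorial_succ]; ring

lemma facne (j : ℕ) : ((j.factorial : ℕ) : ℝ) ≠ 0 := by
  exact_mod_cast j.factorial_pos.ne'

lemma jcS (k q t u : ℕ) :
    ((q:ℝ)+1+(↑t+1)) * jc (t+1+u) (k:ℝ) ((q+1:ℕ):ℝ) (t+1) + ((u:ℝ)+1) * jc (t+1+u) (k:ℝ) ((q+1:ℕ):ℝ) t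
    = (((t:ℝ)+1+u)+(↑q+1)) * jc (t+1+u) ((k+1:ℕ):ℝ) ((q:ℕ):ℝ) (t+1) := by
  rw [jc_eval k (q+1) (t+1+u) (t+1) (k+t+u+1) (k+u) (q+t+u+1+1) (q+t+1+1) u (by omega) (by omega) (by omega) (by omega) (by omega) (by omega),
      jc_eval k (q+1) (t+1+u) t (k+t+u+1) (k+u+1) (q+t+u+1+1) (q+t+1) (u+1) (by omega) (by omega) (by omega) (by omega) (by omega) (by omega),
      jc_eval (k+1) q (t+1+u) (t+1) (k+t+u+1+1) (k+u+1) (q+t+u+1) (q+t+1) u (by omega) (by omega) (by omega) (by omega) (by omega) (by omega)]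
  rw [Ffac (k+u), Ffac (k+t+u+1), Ffac (q+t+1), Ffac (q+t+u+1), Ffac t, Ffac u]
  have n1 : ((k:ℝ)+u+1) ≠ 0 := by positivity
  have n2 : ((k:ℝ)+t+u+1+1) ≠ 0 := by positivity
  have n3 : ((q:ℝ)+t+1+1) ≠ 0 := by positivity
  have n4 : ((q:ℝ)+t+u+1+1) ≠ 0 := by positivity
  have n5 : ((t:ℝ)+1) ≠ 0 := by positivity
  have n6 : ((u:ℝ)+1) ≠ 0 := by positivity
  field_simp [facne]
  push_cast
  ring

lemma jc0 (n k q : ℕ) :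
    ((q:ℝ)+1) * jc n (k:ℝ) ((q+1:ℕ):ℝ) 0 = ((n:ℝ)+↑q+1) * jc n ((k+1:ℕ):ℝ) ((q:ℕ):ℝ) 0 := by
  rw [jc_eval k (q+1) n 0 (k+n) (k+n) (q+n+1) (q+1) n (by omega) (by omega) (by omega) (by omega) (by omega) (by omega),
      jc_eval (k+1) q n 0 (k+n+1) (k+n+1) (q+n) q n (by omega) (by omega) (by omega) (by omega) (by omega) (by omega)]
  rw [Ffac (q+n), Ffac q, Ffac (k+n)]
  have n1 : ((q:ℝ)+1) ≠ 0 := by positivity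
  have n2 : ((q:ℝ)+n+1) ≠ 0 := by positivity
  have n3 : ((k:ℝ)+n+1) ≠ 0 := by positivity
  field_simp [facne]
  push_cast
  ring

lemma pw1 (x : ℝ) (s : ℕ) : (1+x) * (x+1)^s = (x+1)^(s+1) := by rw [pow_succ]; ring

lemma pw2 (x : ℝ) (s : ℕ) : (s:ℝ) * ((1+x) * (x+1)^(s-1)) = (s:ℝ) * (x+1)^s := by
  cases s with
  | zero => simp
  | succ t => rw [Nat.add_sub_cancel, pw1]

lemma lower_id (n k q : ℕ) (x : ℝ) :
    ((q:ℝ)+1) * jacobiP n (k:ℝ) ((q+1:ℕ):ℝ) x + (1+x) * jd n (k:ℝ) ((q+1:ℕ):ℝ) x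
    = ((n:ℝ)+(q:ℝ)+1) * jacobiP n ((k+1:ℕ):ℝ) ((q:ℕ):ℝ) x := by
  have e1 : (1+x) * jd n (k:ℝ) ((q+1:ℕ):ℝ) x = (1/2^n) * ∑ s ∈ Finset.range (n+1),
      (((n-s:ℕ):ℝ) * jc n (k:ℝ) ((q+1:ℕ):ℝ) s * (x-1)^(n-s-1) * (x+1)^(s+1)
        + (s:ℝ) * jc n (k:ℝ) ((q+1:ℕ):ℝ) s * (x-1)^(n-s) * (x+1)^s) := by
    unfold jd
    rw [mul_left_comm]
    congr 1
    rw [Finset.mul_sum]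
    refine Finset.sum_congr rfl fun s _ => ?_
    linear_combination (jc n (k:ℝ) ((q+1:ℕ):ℝ) s * ((n-s:ℕ):ℝ) * (x-1)^(n-s-1)) * pw1 x s
      + (jc n (k:ℝ) ((q+1:ℕ):ℝ) s * (x-1)^(n-s)) * pw2 x s
  have hS : ∑ s ∈ Finset.range (n+1),
        ((((q:ℝ)+1+(s:ℝ)) * jc n (k:ℝ) ((q+1:ℕ):ℝ) s * (x-1)^(n-s) * (x+1)^s)
          + ((n-s:ℕ):ℝ) * jc n (k:ℝ) ((q+1:ℕ):ℝ) s * (x-1)^(n-s-1) * (x+1)^(s+1))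
      = ∑ s ∈ Finset.range (n+1),
        ((n:ℝ)+(q:ℝ)+1) * jc n ((k+1:ℕ):ℝ) ((q:ℕ):ℝ) s * (x-1)^(n-s) * (x+1)^s := by
    rw [Finset.sum_add_distrib]
    rw [Finset.sum_range_succ (fun s => ((n-s:ℕ):ℝ) * jc n (k:ℝ) ((q+1:ℕ):ℝ) s * (x-1)^(n-s-1) * (x+1)^(s+1))]
    rw [Finset.sum_range_succ' (fun s => (((q:ℝ)+1+(s:ℝ)) * jc n (k:ℝ) ((q+1:ℕ):ℝ) s * (x-1)^(n-s) * (x+1)^s)) n]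
    rw [Finset.sum_range_succ' (fun s => ((n:ℝ)+(q:ℝ)+1) * jc n ((k+1:ℕ):ℝ) ((q:ℕ):ℝ) s * (x-1)^(n-s) * (x+1)^s) n]
    simp only [Nat.sub_self, Nat.cast_zero, zero_mul, add_zero, Nat.cast_ofNat]
    have hmain : ∑ i ∈ Finset.range n,
          ((((q:ℝ)+1+((i+1:ℕ):ℝ)) * jc n (k:ℝ) ((q+1:ℕ):ℝ) (i+1) * (x-1)^(n-(i+1)) * (x+1)^(i+1))
            + ((n-i:ℕ):ℝ) * jc n (k:ℝ) ((q+1:ℕ):ℝ) i * (x-1)^(n-i-1) * (x+1)^(i+1))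
        = ∑ i ∈ Finset.range n,
          ((n:ℝ)+(q:ℝ)+1) * jc n ((k+1:ℕ):ℝ) ((q:ℕ):ℝ) (i+1) * (x-1)^(n-(i+1)) * (x+1)^(i+1) := by
      refine Finset.sum_congr rfl fun i hi => ?_
      have hi' : i < n := Finset.mem_range.mp hi
      obtain ⟨u, rfl⟩ : ∃ u, n = i+1+u := ⟨n-i-1, by omega⟩
      rw [show i+1+u-(i+1) = u from by omega, show i+1+u-i-1 = u from by omega,
          show i+1+u-i = u+1 from by omega]
      have H := jcS k q i u
      push_cast at H ⊢
      linear_combination ((x-1)^u * (x+1)^(i+1)) * H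
    rw [Finset.sum_add_distrib] at hmain
    have h0 := jc0 n k q
    push_cast at hmain h0 ⊢
    linear_combination hmain + ((x-1)^(n-0) * (x+1)^0) * h0
  rw [jacobiP_eq, jacobiP_eq, e1]
  rw [mul_left_comm, ← mul_add, mul_left_comm ((n:ℝ)+(q:ℝ)+1)]
  congr 1
  rw [Finset.mul_sum, Finset.mul_sum, ← Finset.sum_add_distrib]
  refine (Finset.sum_congr rfl fun s _ => by ring).trans
    (hS.trans (Finset.sum_congr rfl fun s _ => by ring))

lemma Nnorm_pos (n k m : ℕ) : 0 < Nnorm n k m := by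
  unfold Nnorm Wnorm
  have g1 : 0 < Real.Gamma ((n:ℝ) + ↑k + 1) := Real.Gamma_pos_of_pos (by positivity)
  have g2 : 0 < Real.Gamma ((n:ℝ) + ↑m + 1) := Real.Gamma_pos_of_pos (by positivity)
  have g3 : 0 < Real.Gamma ((n:ℝ) + ↑k + ↑m + 1) := Real.Gamma_pos_of_pos (by positivity)
  have h2 : (0:ℝ) < 2 ^ ((k:ℝ) + ↑m + 1) := Real.rpow_pos_of_pos (by norm_num) _
  have hf : (0:ℝ) < (Nat.factorial n : ℝ) := by exact_mod_cast n.factorial_pos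
  positivity

lemma Nnorm_rel (n k q : ℕ) :
    ((n:ℝ)+(q:ℝ)+1) * Nnorm n (k+1) q = ((n:ℝ)+(k:ℝ)+1) * Nnorm n k (q+1) := by
  unfold Nnorm Wnorm
  rw [show 2 + (k+1) + q = 2 + k + (q+1) from by omega]
  rw [show ((k+1:ℕ):ℝ) + ((q:ℕ):ℝ) + 1 = ((k:ℕ):ℝ) + ((q+1:ℕ):ℝ) + 1 from by push_cast; ring]
  rw [show 2*(n:ℝ) + ((k+1:ℕ):ℝ) + ((q:ℕ):ℝ) + 1 = 2*(n:ℝ) + ((k:ℕ):ℝ) + ((q+1:ℕ):ℝ) + 1 from by push_cast; ring]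
  rw [show (n:ℝ) + ((k+1:ℕ):ℝ) + ((q:ℕ):ℝ) + 1 = (n:ℝ) + ((k:ℕ):ℝ) + ((q+1:ℕ):ℝ) + 1 from by push_cast; ring]
  rw [show (n:ℝ) + ((k+1:ℕ):ℝ) + 1 = ((n+k+1:ℕ):ℝ) + 1 from by push_cast; ring, gnat]
  rw [show (n:ℝ) + ((q:ℕ):ℝ) + 1 = ((n+q:ℕ):ℝ) + 1 from by push_cast; ring, gnat]
  rw [show (n:ℝ) + ((k:ℕ):ℝ) + 1 = ((n+k:ℕ):ℝ) + 1 from by push_cast; ring, gnat]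
  rw [show (n:ℝ) + ((q+1:ℕ):ℝ) + 1 = ((n+q+1:ℕ):ℝ) + 1 from by push_cast; ring, gnat]
  rw [Ffac (n+k), Ffac (n+q)]
  push_cast
  ring

theorem Q_lowering (k m n : ℕ) (hm : 1 ≤ m) (r : ℝ) (hr : r ∈ Set.Ioo (0:ℝ) 1) :
    deriv (Q n k m) r + ((m : ℝ) / r) * Q n k m r =
      2 * Real.sqrt (((n : ℝ) + m) * (n + k + 1)) * Q n (k + 1) (m - 1) r := by
  obtain ⟨q, rfl⟩ : ∃ q, m = q + 1 := ⟨m - 1, by omega⟩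
  simp only [Nat.add_sub_cancel]
  obtain ⟨hr0, hr1⟩ := hr
  have hrne : r ≠ 0 := ne_of_gt hr0
  have hSpos : 0 < Real.sqrt (Nnorm n k (q+1)) := Real.sqrt_pos.mpr (Nnorm_pos n k (q+1))
  have hS'pos : 0 < Real.sqrt (Nnorm n (k+1) q) := Real.sqrt_pos.mpr (Nnorm_pos n (k+1) q)
  -- the derivative of Q
  have hx : HasDerivAt (fun r : ℝ => 2*r^2 - 1) (4*r) r := by
    have h : HasDerivAt (fun r : ℝ => 2*r^2 - 1) (2*(2*r^(2-1))) r :=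
      ((hasDerivAt_pow 2 r).const_mul 2).sub_const 1
    convert h using 1; ring
  have hP : HasDerivAt (fun r : ℝ => jacobiP n (k:ℝ) ((q+1:ℕ):ℝ) (2*r^2-1))
      (jd n (k:ℝ) ((q+1:ℕ):ℝ) (2*r^2-1) * (4*r)) r :=
    HasDerivAt.comp (h₂ := fun y => jacobiP n (k:ℝ) ((q+1:ℕ):ℝ) y) r (hasDerivAt_jacobiP n (k:ℝ) ((q+1:ℕ):ℝ) (2*r^2-1)) hx
  have hpow : HasDerivAt (fun r : ℝ => r^(q+1)) (((q+1:ℕ):ℝ)*r^q) r := by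
    simpa using hasDerivAt_pow (q+1) r
  have hQ : HasDerivAt (Q n k (q+1))
      (((((q+1:ℕ):ℝ)*r^q) * jacobiP n (k:ℝ) ((q+1:ℕ):ℝ) (2*r^2-1)
        + r^(q+1) * (jd n (k:ℝ) ((q+1:ℕ):ℝ) (2*r^2-1) * (4*r))) / Real.sqrt (Nnorm n k (q+1))) r :=
    (hpow.mul hP).div_const _
  rw [hQ.deriv]
  -- the lowering identity
  have hL := lower_id n k q (2*r^2-1)
  -- the norm relation
  have key : ((n:ℝ)+(q:ℝ)+1) * Real.sqrt (Nnorm n (k+1) q)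
      = Real.sqrt (((n:ℝ)+(q:ℝ)+1) * ((n:ℝ)+(k:ℝ)+1)) * Real.sqrt (Nnorm n k (q+1)) := by
    have h1 : ((n:ℝ)+(q:ℝ)+1) * Real.sqrt (Nnorm n (k+1) q)
        = Real.sqrt (((n:ℝ)+(q:ℝ)+1)^2 * Nnorm n (k+1) q) := by
      rw [Real.sqrt_mul (by positivity), Real.sqrt_sq (by positivity)]
    rw [h1, ← Real.sqrt_mul (by positivity)]
    congr 1
    linear_combination ((n:ℝ)+(q:ℝ)+1) * Nnorm_rel n k q
  unfold Q
  push_cast at hL key ⊢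
  rw [show ((n:ℝ) + ((q:ℝ) + 1)) * ((n:ℝ) + (k:ℝ) + 1) = ((n:ℝ) + (q:ℝ) + 1) * ((n:ℝ) + (k:ℝ) + 1) from by ring]
  set G := Real.sqrt (((n:ℝ) + (q:ℝ) + 1) * ((n:ℝ) + (k:ℝ) + 1)) with hG
  field_simp
  linear_combination (2*r^(q+1) * Real.sqrt (Nnorm n (k+1) q)) * hL
    + (2*r^(q+1) * jacobiP n ((k:ℝ)+1) (q:ℝ) (2*r^2-1)) * key
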